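/- Let d ≥ 5 be an integer and define l_0 := d, l_{k+1} := ⌈(l_k − ⌊(l_k − 2)/3⌋)/2⌉. Then the set {k ≥ 0 : l_k < 5} is nonempty, and its minimum k_0 satisfies k_0 ≤ log_3[(4/13)(d − 3/4)] + 1. -/
import Mathlib


/-- for an integer `d ≥ 5` and the sequence `l_0 = d`,
`l_{k+1} = ⌈(l_k − ⌊(l_k − 2)/3⌋)/2⌉`, the set `{k : l_k < 5}` is nonempty and its
minimum `k₀` satisfies `k₀ ≤ log_3[(4/13)(d − 3/4)] + 1`. -/
theorem recursion_depth_bound (d : ℤ) (hd : 5 ≤ d) (l : ℕ → ℤ) (h0 : l 0 = d)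
    (hrec : ∀ k : ℕ, l (k + 1) = ⌈((l k : ℝ) - (⌊((l k : ℝ) - 2) / 3⌋ : ℝ)) / 2⌉) :
    {k : ℕ | l k < 5}.Nonempty ∧
      ((sInf {k : ℕ | l k < 5} : ℕ) : ℝ) ≤
        Real.logb 3 (4 / 13 * ((d : ℝ) - 3 / 4)) + 1 := by
  -- Step 1: integer inequality 3 * l (k+1) ≤ l k + 3
  have key : ∀ k : ℕ, 3 * l (k + 1) ≤ l k + 3 := by
    intro k
    set L := l k with hL
    set a : ℤ := ⌊((L : ℝ) - 2) / 3⌋ with ha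
    have ha1 : (a : ℝ) ≤ ((L : ℝ) - 2) / 3 := Int.floor_le _
    have ha2 : ((L : ℝ) - 2) / 3 < a + 1 := Int.lt_floor_add_one _
    have ha1' : 3 * a ≤ L - 2 := by
      have : 3 * (a : ℝ) ≤ (L : ℝ) - 2 := by linarith
      exact_mod_cast this
    have ha2' : L - 2 < 3 * a + 3 := by
      have : (L : ℝ) - 2 < 3 * (a : ℝ) + 3 := by linarith
      exact_mod_cast this
    set b : ℤ := l (k + 1) with hb
    have hbeq : b = ⌈((L : ℝ) - (a : ℝ)) / 2⌉ := hrec k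
    have hb1 : ((L : ℝ) - a) / 2 ≤ (b : ℝ) := hbeq ▸ Int.le_ceil _
    have hb2 : (b : ℝ) < ((L : ℝ) - a) / 2 + 1 := by
      rw [hbeq]; exact Int.ceil_lt_add_one _
    have hb1' : L - a ≤ 2 * b := by
      have : (L : ℝ) - a ≤ 2 * (b : ℝ) := by linarith
      exact_mod_cast this
    have hb2' : 2 * b < L - a + 2 := by
      have : 2 * (b : ℝ) < (L : ℝ) - a + 2 := by linarith
      exact_mod_cast this
    omega
  -- Step 2: real decay bound
  have decay : ∀ k : ℕ, (l k : ℝ) - 3 / 2 ≤ ((d : ℝ) - 3 / 2) / 3 ^ k := by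
    intro k
    induction k with
    | zero => simp [h0]
    | succ k ih =>
      have hk := key k
      have hk' : (3 : ℝ) * (l (k + 1) : ℝ) ≤ (l k : ℝ) + 3 := by exact_mod_cast hk
      have h3 : (0 : ℝ) < 3 ^ k := by positivity
      rw [pow_succ, ← div_div]
      have step : ((l k : ℝ) - 3 / 2) / 3 ≤ ((d : ℝ) - 3 / 2) / 3 ^ k / 3 := by
        apply div_le_div_of_nonneg_right ih (by norm_num) |>.trans_eq rfl
      linarith
  -- Choose n
  set x : ℝ := Real.logb 3 (2 / 7 * ((d : ℝ) - 3 / 2)) with hx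
  have hargpos : (0 : ℝ) < 2 / 7 * ((d : ℝ) - 3 / 2) := by
    have : (5 : ℝ) ≤ (d : ℝ) := by exact_mod_cast hd
    nlinarith
  have harg1 : (1 : ℝ) ≤ 2 / 7 * ((d : ℝ) - 3 / 2) := by
    have : (5 : ℝ) ≤ (d : ℝ) := by exact_mod_cast hd
    nlinarith
  have hxnn : 0 ≤ x := Real.logb_nonneg (by norm_num) harg1
  have hfl : (0 : ℤ) ≤ ⌊x⌋ := Int.floor_nonneg.mpr hxnn
  set n : ℕ := ⌊x⌋.toNat + 1 with hn
  have hncast : (n : ℝ) = (⌊x⌋ : ℝ) + 1 := by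
    have h := Int.toNat_of_nonneg hfl
    rw [hn]
    exact_mod_cast congrArg (fun z : ℤ => (z : ℝ) + 1) h
  have hxn : x < (n : ℝ) := by
    rw [hncast]
    have := Int.lt_floor_add_one x
    linarith
  -- 3^n > arg
  have hpow : 2 / 7 * ((d : ℝ) - 3 / 2) < 3 ^ n := by
    have h1 : 2 / 7 * ((d : ℝ) - 3 / 2) = (3 : ℝ) ^ x := by
      rw [hx, Real.rpow_logb (by norm_num) (by norm_num) hargpos]
    have h2 : (3 : ℝ) ^ x < (3 : ℝ) ^ (n : ℝ) :=
      Real.rpow_lt_rpow_left_iff (by norm_num : (1:ℝ) < 3) |>.mpr hxn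
    rw [h1]
    calc (3 : ℝ) ^ x < (3 : ℝ) ^ (n : ℝ) := h2
      _ = (3 : ℝ) ^ n := Real.rpow_natCast 3 n
  -- l n < 5
  have hln : l n < 5 := by
    have hd1 := decay n
    have h3 : (0 : ℝ) < (3 : ℝ) ^ n := by positivity
    have : ((d : ℝ) - 3 / 2) / 3 ^ n < 7 / 2 := by
      rw [div_lt_iff₀ h3]
      nlinarith
    have : (l n : ℝ) < 5 := by linarith
    exact_mod_cast this
  have hmem : n ∈ {k : ℕ | l k < 5} := hln
  refine ⟨⟨n, hmem⟩, ?_⟩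
  have hsinf : sInf {k : ℕ | l k < 5} ≤ n := Nat.sInf_le hmem
  have hsinf' : ((sInf {k : ℕ | l k < 5} : ℕ) : ℝ) ≤ (n : ℝ) := by exact_mod_cast hsinf
  refine hsinf'.trans ?_
  rw [hncast]
  have hfl' : (⌊x⌋ : ℝ) ≤ x := Int.floor_le x
  have hlogmono : x ≤ Real.logb 3 (4 / 13 * ((d : ℝ) - 3 / 4)) := by
    apply Real.logb_le_logb_of_le (by norm_num : (1:ℝ) < 3) hargpos
    · have : (5 : ℝ) ≤ (d : ℝ) := by exact_mod_cast hd
      nlinarith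
  linarith
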